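/- Let φ : ℝ → ℝ be monotone increasing and Lipschitz, let x₁, …, x_n be distinct reals, and let Θ[x;φ] be the matrix with off-diagonal entries (φ(x_i)−φ(x_j))/(x_i−x_j) and diagonal entries making all row sums zero. Then for any symmetric norm ‖·‖ on ℝⁿ and any u ∈ ℝⁿ with Σ_i u_i = 0, one has ‖Θ[x;φ] u‖ ≤ n·Lip(φ)·‖u‖. -/

import Mathlib

open Finset

/-- The matrix `Θ[x;φ]`: off-diagonal entries `(φ(x_i) − φ(x_j))/(x_i − x_j)`,
diagonal entries chosen so that all row sums vanish. -/
noncomputable def ThetaPhi {n : ℕ} (x : Fin n → ℝ) (φ : ℝ → ℝ) :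
    Matrix (Fin n) (Fin n) ℝ :=
  Matrix.of fun i j =>
    if i = j then
      -∑ l ∈ Finset.univ.erase i, (φ (x i) - φ (x l)) / (x i - x l)
    else (φ (x i) - φ (x j)) / (x i - x j)

section Aux
variable {n : ℕ} (N : (Fin n → ℝ) → ℝ)
  (hN_add : ∀ a b, N (a + b) ≤ N a + N b)
  (hN_smul : ∀ (c : ℝ) a, N (c • a) = |c| * N a)
  (hN_sign : ∀ (ε a : Fin n → ℝ), (∀ i, ε i = 1 ∨ ε i = -1) →
      N (fun i => ε i * a i) = N a)

include hN_smul in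
lemma symN_zero : N 0 = 0 := by
  have := hN_smul 0 0
  simpa using this

include hN_add hN_smul in
lemma symN_sum {α : Type*} (s : Finset α) (f : α → Fin n → ℝ) :
    N (∑ a ∈ s, f a) ≤ ∑ a ∈ s, N (f a) := by
  classical
  induction s using Finset.induction with
  | empty => simp [symN_zero N hN_smul]
  | insert _ _ h ih =>
    rw [Finset.sum_insert h, Finset.sum_insert h]
    exact le_trans (hN_add _ _) (by linarith)

include hN_add hN_smul hN_sign in
lemma symN_step (v : Fin n → ℝ) (i : Fin n) (t : ℝ) (ht : |t| ≤ 1) :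
    N (Function.update v i (t * v i)) ≤ N v := by
  obtain ⟨ht1, ht2⟩ := abs_le.mp ht
  set w : Fin n → ℝ := fun j => (if j = i then (-1 : ℝ) else 1) * v j with hw_def
  have hw : N w = N v := hN_sign _ v (fun j => by by_cases h : j = i <;> simp [h])
  have key : Function.update v i (t * v i) = ((1+t)/2) • v + ((1-t)/2) • w := by
    funext j
    by_cases h : j = i
    · subst h
      simp only [Function.update_self, Pi.add_apply, Pi.smul_apply, smul_eq_mul, hw_def,
        if_pos rfl, ite_true]
      ring
    · simp only [Function.update_of_ne h, Pi.add_apply, Pi.smul_apply, smul_eq_mul, hw_def,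
        if_neg h]
      ring
  rw [key]
  calc N (((1+t)/2) • v + ((1-t)/2) • w)
      ≤ N (((1+t)/2) • v) + N (((1-t)/2) • w) := hN_add _ _
    _ = |(1+t)/2| * N v + |(1-t)/2| * N v := by rw [hN_smul, hN_smul, hw]
    _ = N v := by
        rw [abs_of_nonneg (by linarith), abs_of_nonneg (by linarith)]; ring

include hN_add hN_smul hN_sign in
lemma symN_mono (a b : Fin n → ℝ) (hab : ∀ i, |a i| ≤ |b i|) : N a ≤ N b := by
  classical
  have H : ∀ s : Finset (Fin n), N (fun i => if i ∈ s then a i else b i) ≤ N b := by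
    intro s
    induction s using Finset.induction with
    | empty => simp
    | @insert i s hi ih =>
      set v : Fin n → ℝ := fun j => if j ∈ s then a j else b j with hv_def
      set t : ℝ := if b i = 0 then 0 else a i / b i with ht_def
      have hvi : v i = b i := by simp [hv_def, hi]
      have ht : |t| ≤ 1 := by
        by_cases h : b i = 0
        · simp [ht_def, h]
        · rw [ht_def, if_neg h, abs_div, div_le_one (abs_pos.mpr h)]
          exact hab i
      have hti : t * v i = a i := by
        by_cases h : b i = 0
        · have : a i = 0 := by
            have := hab i
            rw [h, abs_zero] at this
            exact abs_eq_zero.mp (le_antisymm this (abs_nonneg _))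
          simp [ht_def, h, hvi, this]
        · rw [ht_def, if_neg h, hvi, div_mul_cancel₀ _ h]
      have hupd : (fun j => if j ∈ insert i s then a j else b j)
          = Function.update v i (t * v i) := by
        funext j
        by_cases h : j = i
        · subst h; simp [hti, hi]
        · simp [Function.update_of_ne h, hv_def, h]
      rw [hupd]
      exact le_trans (symN_step N hN_add hN_smul hN_sign v i t ht) ih
  have := H Finset.univ
  simpa using this

end Aux

/-- Corollary 1: for monotone increasing Lipschitz `φ`, a symmetric norm `N`
and `u` with zero coordinate sum, `‖Θ[x;φ] u‖ ≤ n·Lip(φ)·‖u‖`. -/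
theorem thetaPhi_symmetric_norm_bound {n : ℕ} (φ : ℝ → ℝ) (K : NNReal)
    (hφ_mono : Monotone φ) (hφ_lip : LipschitzWith K φ)
    (x : Fin n → ℝ) (hx : Function.Injective x)
    (N : (Fin n → ℝ) → ℝ)
    (hN_add : ∀ a b, N (a + b) ≤ N a + N b)
    (hN_smul : ∀ (c : ℝ) a, N (c • a) = |c| * N a)
    (hN_def : ∀ a, N a = 0 → a = 0)
    (hN_perm : ∀ (σ : Equiv.Perm (Fin n)) a, N (a ∘ σ) = N a)
    (hN_sign : ∀ (ε a : Fin n → ℝ), (∀ i, ε i = 1 ∨ ε i = -1) →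
      N (fun i => ε i * a i) = N a)
    (u : Fin n → ℝ) (hu : ∑ i, u i = 0) :
    N ((ThetaPhi x φ).mulVec u) ≤ n * K * N u := by
  classical
  have hN_nonneg : ∀ a, 0 ≤ N a := by
    intro a
    have h1 : N (-a) = N a := by have := hN_smul (-1) a; simpa using this
    have h2 := hN_add a (-a)
    rw [add_neg_cancel] at h2
    rw [symN_zero N hN_smul] at h2
    linarith
  -- bounds on divided differences
  have key : ∀ a b : ℝ, a ≠ b → 0 ≤ (φ a - φ b) / (a - b) ∧ (φ a - φ b) / (a - b) ≤ K := by
    intro a b hab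
    have hlip : |φ a - φ b| ≤ (K : ℝ) * |a - b| := by
      have := hφ_lip.dist_le_mul a b
      rwa [Real.dist_eq, Real.dist_eq] at this
    rcases lt_or_gt_of_ne hab with h | h
    · have h1 : φ a ≤ φ b := hφ_mono h.le
      have h2 : a - b < 0 := by linarith
      have h3 : |a - b| = b - a := by rw [abs_of_neg h2]; ring
      rw [h3] at hlip
      obtain ⟨hl1, hl2⟩ := abs_le.mp hlip
      refine ⟨div_nonneg_iff.mpr (Or.inr ⟨by linarith, h2.le⟩), ?_⟩
      rw [div_le_iff_of_neg h2]
      nlinarith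
    · have h1 : φ b ≤ φ a := hφ_mono h.le
      have h2 : 0 < a - b := by linarith
      have h3 : |a - b| = a - b := abs_of_pos h2
      rw [h3] at hlip
      obtain ⟨hl1, hl2⟩ := abs_le.mp hlip
      refine ⟨div_nonneg (by linarith) h2.le, ?_⟩
      rw [div_le_iff₀ h2]
      nlinarith
  have hc : ∀ i j : Fin n, i ≠ j →
      0 ≤ (φ (x i) - φ (x j)) / (x i - x j) ∧ (φ (x i) - φ (x j)) / (x i - x j) ≤ K :=
    fun i j hij => key (x i) (x j) (fun h => hij (hx h))
  -- row sums of Θ vanish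
  have hΘrow : ∀ i, ∑ j, ThetaPhi x φ i j = 0 := by
    intro i
    rw [← Finset.add_sum_erase _ _ (Finset.mem_univ i)]
    have h1 : ThetaPhi x φ i i
        = -∑ l ∈ Finset.univ.erase i, (φ (x i) - φ (x l)) / (x i - x l) := by
      simp [ThetaPhi]
    have h2 : ∑ j ∈ Finset.univ.erase i, ThetaPhi x φ i j
        = ∑ j ∈ Finset.univ.erase i, (φ (x i) - φ (x j)) / (x i - x j) := by
      refine Finset.sum_congr rfl fun j hj => ?_
      have hij : ¬ i = j := fun h => (Finset.mem_erase.mp hj).1 h.symm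
      simp [ThetaPhi, hij]
    rw [h1, h2]; ring
  -- Θ is symmetric
  have hΘsymm : ∀ i j, ThetaPhi x φ i j = ThetaPhi x φ j i := by
    intro i j
    by_cases h : i = j
    · rw [h]
    · have h' : ¬ j = i := fun hh => h hh.symm
      simp only [ThetaPhi, Matrix.of_apply, if_neg h, if_neg h']
      rw [← neg_div_neg_eq]
      ring_nf
  have hΘcol : ∀ j, ∑ i, ThetaPhi x φ i j = 0 := by
    intro j
    rw [Finset.sum_congr rfl fun i _ => hΘsymm i j]
    exact hΘrow j
  -- the matrix B = K·J − Θ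
  set B : Matrix (Fin n) (Fin n) ℝ := Matrix.of fun i j => (K : ℝ) - ThetaPhi x φ i j with hB_def
  have hB_nonneg : ∀ i j, 0 ≤ B i j := by
    intro i j
    by_cases h : i = j
    · subst h
      have hd : ThetaPhi x φ i i ≤ 0 := by
        have hii : ThetaPhi x φ i i
            = -∑ l ∈ Finset.univ.erase i, (φ (x i) - φ (x l)) / (x i - x l) := by
          simp [ThetaPhi]
        rw [hii, neg_nonpos]
        exact Finset.sum_nonneg fun l hl =>
          (hc i l (fun hh => (Finset.mem_erase.mp hl).1 hh.symm)).1
      have hK : (0:ℝ) ≤ (K:ℝ) := K.2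
      simp only [hB_def, Matrix.of_apply]
      linarith
    · simp only [hB_def, Matrix.of_apply, ThetaPhi, if_neg h]
      linarith [(hc i j h).2]
  have hBrow : ∀ i, ∑ j, B i j = n * K := by
    intro i
    simp only [hB_def, Matrix.of_apply]
    rw [Finset.sum_sub_distrib, hΘrow i, Finset.sum_const, Finset.card_univ]
    simp [mul_comm]
  have hBcol : ∀ j, ∑ i, B i j = n * K := by
    intro j
    simp only [hB_def, Matrix.of_apply]
    rw [Finset.sum_sub_distrib, hΘcol j, Finset.sum_const, Finset.card_univ]
    simp [mul_comm]
  -- Θu = −Bu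
  have hΘu : (ThetaPhi x φ).mulVec u = -(B.mulVec u) := by
    funext i
    simp only [Matrix.mulVec, dotProduct, Pi.neg_apply, hB_def, Matrix.of_apply]
    have hsum : ∑ j, ((K:ℝ) - ThetaPhi x φ i j) * u j
        = (K:ℝ) * ∑ j, u j - ∑ j, ThetaPhi x φ i j * u j := by
      rw [Finset.mul_sum, ← Finset.sum_sub_distrib]
      exact Finset.sum_congr rfl fun j _ => by ring
    rw [hsum, hu]
    ring
  have hneg : N (-(B.mulVec u)) = N (B.mulVec u) := by
    have := hN_smul (-1) (B.mulVec u); simpa using this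
  -- the vector of absolute values
  set au : Fin n → ℝ := fun i => |u i| with hau_def
  have hNau : N au = N u := by
    have h := hN_sign (fun i => if 0 ≤ u i then 1 else -1) u
      (fun i => by by_cases h : 0 ≤ u i <;> simp [h])
    rw [← h]
    congr 1
    funext i
    by_cases h' : 0 ≤ u i
    · simp [hau_def, h', abs_of_nonneg h']
    · simp [hau_def, h', abs_of_neg (lt_of_not_ge h')]
  have hmono1 : N (B.mulVec u) ≤ N (B.mulVec au) := by
    apply symN_mono N hN_add hN_smul hN_sign
    intro i
    have h1 : |(B.mulVec u) i| ≤ (B.mulVec au) i := by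
      simp only [Matrix.mulVec, dotProduct]
      refine le_trans (Finset.abs_sum_le_sum_abs _ _) ?_
      refine Finset.sum_le_sum fun j _ => ?_
      rw [abs_mul, abs_of_nonneg (hB_nonneg i j)]
    exact le_trans h1 (le_abs_self _)
  rw [hΘu, hneg]
  by_cases hnK : (n : ℝ) * K = 0
  · -- degenerate case: B = 0
    have hB0 : ∀ i j, B i j = 0 := by
      intro i j
      have hr := hBrow i
      rw [show ((n:ℝ) * K : ℝ) = 0 from hnK] at hr
      exact (Finset.sum_eq_zero_iff_of_nonneg (fun j _ => hB_nonneg i j)).mp hr j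
        (Finset.mem_univ j)
    have hBu0 : B.mulVec u = 0 := by
      funext i
      simp [Matrix.mulVec, dotProduct, hB0]
    rw [hBu0, symN_zero N hN_smul]
    have : (0:ℝ) ≤ (n:ℝ) * (K:ℝ) := by positivity
    have := hN_nonneg u
    positivity
  · have hpos : 0 < (n:ℝ) * K :=
      lt_of_le_of_ne (by positivity) (Ne.symm hnK)
    set S : Matrix (Fin n) (Fin n) ℝ := ((n:ℝ) * K)⁻¹ • B with hS_def
    have hS : S ∈ doublyStochastic ℝ (Fin n) := by
      rw [mem_doublyStochastic_iff_sum]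
      refine ⟨fun i j => mul_nonneg (inv_nonneg.mpr hpos.le) (hB_nonneg i j),
        fun i => ?_, fun j => ?_⟩
      · simp only [hS_def, Matrix.smul_apply, smul_eq_mul]
        rw [← Finset.mul_sum, hBrow i, inv_mul_cancel₀ hnK]
      · simp only [hS_def, Matrix.smul_apply, smul_eq_mul]
        rw [← Finset.mul_sum, hBcol j, inv_mul_cancel₀ hnK]
    obtain ⟨w, hw0, hw1, hw2⟩ := exists_eq_sum_perm_of_mem_doublyStochastic hS
    have hSau : S.mulVec au = ∑ σ : Equiv.Perm (Fin n), w σ • (au ∘ σ) := by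
      rw [← hw2]
      funext i
      simp only [Matrix.mulVec, dotProduct, Finset.sum_apply, Matrix.sum_apply,
        Matrix.smul_apply, Pi.smul_apply, Function.comp_apply, smul_eq_mul,
        Equiv.Perm.permMatrix, PEquiv.toMatrix_apply, Equiv.toPEquiv_apply, Option.mem_def,
        Option.some.injEq, Finset.sum_mul]
      rw [Finset.sum_comm]
      refine Finset.sum_congr rfl fun σ _ => ?_
      have hterm : ∀ j, (w σ * if σ i = j then (1:ℝ) else 0) * au j
          = if σ i = j then w σ * au j else 0 := by
        intro j
        by_cases h : σ i = j <;> simp [h]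
      rw [Finset.sum_congr rfl fun j _ => hterm j, Finset.sum_ite_eq]
      simp
    have hfinal : N (S.mulVec au) ≤ N au := by
      rw [hSau]
      refine le_trans (symN_sum N hN_add hN_smul Finset.univ _) ?_
      have heq : ∀ σ : Equiv.Perm (Fin n), N (w σ • (au ∘ σ)) = w σ * N au := by
        intro σ
        rw [show w σ • (au ∘ σ) = w σ • (au ∘ σ) from rfl, hN_smul, abs_of_nonneg (hw0 σ),
          hN_perm]
      rw [Finset.sum_congr rfl fun σ _ => heq σ, ← Finset.sum_mul, hw1, one_mul]
    have hBS : B = ((n:ℝ) * K) • S := by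
      rw [hS_def, smul_smul, mul_inv_cancel₀ hnK, one_smul]
    calc N (B.mulVec u) ≤ N (B.mulVec au) := hmono1
      _ = ((n:ℝ) * K) * N (S.mulVec au) := by
          rw [hBS, Matrix.smul_mulVec, hN_smul, abs_of_nonneg hpos.le]
      _ ≤ ((n:ℝ) * K) * N au := mul_le_mul_of_nonneg_left hfinal hpos.le
      _ = n * K * N u := by rw [hNau]
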